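/- Let n = 3 and let G ⊆ SL(3,ℂ) be a finite abelian subgroup. Let θ, θ₀ ∈ Θ and let F be a θ-stable G-constellation such that θ₀(E) ≥ 0 for every G-submodule E of F. Let A₁ ⊆ Irr(G) be a nonempty proper subset with θ₀(A₁) = 0, and suppose that A₁ and its complement Irr(G)∖A₁ are the only nonempty proper subsets A ⊆ Irr(G) with θ₀(A) = 0. If S and S′ are G-submodules of F whose underlying G-representations are both ⊕_{ρ∈A₁} ρ, then S = S′. -/

import Mathlib

/-!
Common setup: `G`-constellations for a finite subgroup `G ⊆ GL(n,ℂ)`.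

* `polyAct g` is the action of `g ∈ GL(n,ℂ)` on the polynomial ring
  `A = ℂ[x₁,…,xₙ]` given by `(g·f)(x) = f(g⁻¹·x)`.
* `GMod n G F` is a `G`-equivariant `A`-module structure on the ℂ-vector space `F`:
  an `A`-module structure `actA` (as a ℂ-algebra map `A →ₐ End ℂ F`), a `G`-action
  `actG` by ℂ-linear automorphisms, and the compatibility `g·(f·v) = (g·f)·(g·v)`.
* `IrrChar G` is the set of irreducible complex characters of `G`.
* `multChar ρ χ` is the multiplicity `m_ρ` read off from a character `χ`,
  `thetaOfChar θ χ = Σ_ρ m_ρ(χ)·θ(ρ)`.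
* `IsThetaParam G θ` says `θ ∈ Θ`, i.e. `Σ_ρ (dim ρ)·θ(ρ) = 0`;
  `IsThetaPlus G θ` says `θ ∈ Θ₊`.
* `M.IsSub E` says the ℂ-subspace `E` is a `G`-submodule; `M.subChar E h` is the
  character of the induced `G`-representation on `E`.
* `M.IsConstellation` : `F` is finite dimensional and isomorphic, as a
  `ℂ[G]`-module, to the regular representation `Map(G,ℂ)`.
* `M.IsStable θ` / `M.IsSemistable θ` : `θ(E) > 0` (resp. `≥ 0`) for every
  `G`-submodule `0 ≠ E ≠ F`.
* `IsGHom M M' φ` : `φ` is simultaneously `A`-linear and `G`-equivariant.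
-/

open CategoryTheory

noncomputable section

/-- The action of `g ∈ GL(n,ℂ)` on polynomials, `(g·f)(x) = f(g⁻¹·x)`:
the variable `xᵢ` is replaced by `∑ⱼ (g⁻¹)ᵢⱼ xⱼ`. -/
def polyAct {n : ℕ} (g : GL (Fin n) ℂ) :
    MvPolynomial (Fin n) ℂ →ₐ[ℂ] MvPolynomial (Fin n) ℂ :=
  MvPolynomial.aeval fun i =>
    ∑ j : Fin n, ((g⁻¹ : GL (Fin n) ℂ) : Matrix (Fin n) (Fin n) ℂ) i j • MvPolynomial.X j

/-- A `G`-equivariant module over `A = ℂ[x₁,…,xₙ]` on the ℂ-vector space `F`. -/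
structure GMod (n : ℕ) (G : Subgroup (GL (Fin n) ℂ)) (F : Type)
    [AddCommGroup F] [Module ℂ F] : Type where
  actA : MvPolynomial (Fin n) ℂ →ₐ[ℂ] Module.End ℂ F
  actG : G →* (F ≃ₗ[ℂ] F)
  equivariance : ∀ (g : G) (f : MvPolynomial (Fin n) ℂ) (v : F),
    actG g (actA f v) = actA (polyAct (g : GL (Fin n) ℂ) f) (actG g v)

/-- The irreducible complex characters of `G`. -/
def IrrChar {n : ℕ} (G : Subgroup (GL (Fin n) ℂ)) : Type :=
  {χ : G → ℂ // ∃ V : FDRep ℂ G, Simple V ∧ ∀ g : G, FDRep.character V g = χ g}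

/-- The multiplicity `m_ρ` of the irreducible character `ρ` in a character `χ`,
computed by the usual inner product of characters. -/
def multChar {n : ℕ} {G : Subgroup (GL (Fin n) ℂ)} (ρ : IrrChar G) (χ : G → ℂ) : ℂ :=
  (Nat.card G : ℂ)⁻¹ * ∑ᶠ g : G, ρ.1 g⁻¹ * χ g

/-- `θ(E) = Σ_ρ m_ρ(E)·θ(ρ)`, computed from the character of `E`. -/
def thetaOfChar {n : ℕ} {G : Subgroup (GL (Fin n) ℂ)}
    (θ : IrrChar G → ℚ) (χ : G → ℂ) : ℂ :=
  ∑ᶠ ρ : IrrChar G, multChar ρ χ * (θ ρ : ℂ)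

/-- `θ ∈ Θ`, i.e. `Σ_ρ (dim ρ)·θ(ρ) = 0` (note `dim ρ = ρ(1)`). -/
def IsThetaParam {n : ℕ} (G : Subgroup (GL (Fin n) ℂ)) (θ : IrrChar G → ℚ) : Prop :=
  ∑ᶠ ρ : IrrChar G, ρ.1 1 * (θ ρ : ℂ) = 0

/-- `θ ∈ Θ₊`, i.e. `θ ∈ Θ` and `θ(ρ) > 0` for every nontrivial `ρ ∈ Irr(G)`. -/
def IsThetaPlus {n : ℕ} (G : Subgroup (GL (Fin n) ℂ)) (θ : IrrChar G → ℚ) : Prop :=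
  IsThetaParam G θ ∧ ∀ ρ : IrrChar G, ρ.1 ≠ (fun _ => (1 : ℂ)) → 0 < θ ρ

namespace GMod

variable {n : ℕ} {G : Subgroup (GL (Fin n) ℂ)} {F F' : Type}
  [AddCommGroup F] [Module ℂ F] [AddCommGroup F'] [Module ℂ F']

/-- The character of the `G`-representation `F`. -/
def char (M : GMod n G F) : G → ℂ :=
  fun g => LinearMap.trace ℂ F ↑(M.actG g)

/-- `E` is a `G`-submodule: a subspace stable under the `A`-action and the `G`-action. -/
def IsSub (M : GMod n G F) (E : Submodule ℂ F) : Prop :=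
  (∀ (f : MvPolynomial (Fin n) ℂ) (v : F), v ∈ E → M.actA f v ∈ E) ∧
  (∀ (g : G) (v : F), v ∈ E → M.actG g v ∈ E)

/-- The character of the `G`-representation on a `G`-stable subspace `E`. -/
def subChar (M : GMod n G F) (E : Submodule ℂ F)
    (h : ∀ (g : G) (v : F), v ∈ E → M.actG g v ∈ E) : G → ℂ :=
  fun g => LinearMap.trace ℂ E
    ((↑(M.actG g) : F →ₗ[ℂ] F).restrict (p := E) (q := E) (fun v hv => by exact h g v hv))

/-- `F` is a `G`-constellation: finite dimensional and isomorphic as a `ℂ[G]`-module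
to the regular representation `Map(G,ℂ)` (with `(g·φ)(h) = φ(g⁻¹h)`). -/
def IsConstellation (M : GMod n G F) : Prop :=
  FiniteDimensional ℂ F ∧
  ∃ e : F ≃ₗ[ℂ] (G → ℂ), ∀ (g : G) (v : F) (h : G), e (M.actG g v) h = e v (g⁻¹ * h)

/-- `θ`-stability: `θ(E) > 0` for every `G`-submodule `0 ≠ E ≠ F`. -/
def IsStable (M : GMod n G F) (θ : IrrChar G → ℚ) : Prop :=
  ∀ (E : Submodule ℂ F) (hE : M.IsSub E), E ≠ ⊥ → E ≠ ⊤ →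
    0 < (thetaOfChar θ (M.subChar E hE.2)).re

/-- `θ`-semistability: `θ(E) ≥ 0` for every `G`-submodule `0 ≠ E ≠ F`. -/
def IsSemistable (M : GMod n G F) (θ : IrrChar G → ℚ) : Prop :=
  ∀ (E : Submodule ℂ F) (hE : M.IsSub E), E ≠ ⊥ → E ≠ ⊤ →
    0 ≤ (thetaOfChar θ (M.subChar E hE.2)).re

/-- The subspace `F^G` of `G`-invariant vectors. -/
def invariants (M : GMod n G F) : Submodule ℂ F where
  carrier := {v | ∀ g : G, M.actG g v = v}
  add_mem' := by
    intro a b ha hb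
    intro g
    rw [map_add, ha g, hb g]
  zero_mem' := by
    intro g
    rw [map_zero]
  smul_mem' := by
    intro c v hv
    intro g
    rw [map_smul, hv g]

/-- The `A`-submodule of `F` generated by a subset `s ⊆ F`. -/
def aspan (M : GMod n G F) (s : Set F) : Submodule ℂ F :=
  Submodule.span ℂ {w | ∃ (f : MvPolynomial (Fin n) ℂ) (v : F), v ∈ s ∧ w = M.actA f v}

end GMod

/-- `φ : F → F'` is simultaneously `A`-linear and `G`-equivariant. -/
def IsGHom {n : ℕ} {G : Subgroup (GL (Fin n) ℂ)} {F F' : Type}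
    [AddCommGroup F] [Module ℂ F] [AddCommGroup F'] [Module ℂ F']
    (M : GMod n G F) (M' : GMod n G F') (φ : F →ₗ[ℂ] F') : Prop :=
  (∀ (f : MvPolynomial (Fin n) ℂ) (v : F), φ (M.actA f v) = M'.actA f (φ v)) ∧
  (∀ (g : G) (v : F), φ (M.actG g v) = M'.actG g (φ v))

end
/-- (`n = 3`, `G ⊆ SL(3,ℂ)` finite abelian.) With `θ, θ₀, F, A₁` as in
Statement 3: if `S` and `S′` are `G`-submodules of `F` whose underlying `G`-representations
are both `⊕_{ρ∈A₁} ρ`, then `S = S′`. -/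
theorem stmt4 {G : Subgroup (GL (Fin 3) ℂ)} [Finite G]
    (hab : ∀ a b : G, a * b = b * a)
    (hSL : ∀ g : G, Matrix.det ((g : GL (Fin 3) ℂ) : Matrix (Fin 3) (Fin 3) ℂ) = 1)
    (θ θ₀ : IrrChar G → ℚ) (hθ : IsThetaParam G θ) (hθ₀ : IsThetaParam G θ₀)
    {F : Type} [AddCommGroup F] [Module ℂ F] (M : GMod 3 G F)
    (hcon : M.IsConstellation) (hstab : M.IsStable θ)
    (hss : ∀ (E : Submodule ℂ F) (hE : M.IsSub E),
      0 ≤ (thetaOfChar θ₀ (M.subChar E hE.2)).re)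
    (A₁ : Set (IrrChar G)) (hne : A₁.Nonempty) (hproper : A₁ ≠ Set.univ)
    (hA₁zero : (∑ᶠ ρ ∈ A₁, θ₀ ρ) = 0)
    (honly : ∀ A : Set (IrrChar G), A.Nonempty → A ≠ Set.univ →
      (∑ᶠ ρ ∈ A, θ₀ ρ) = 0 → A = A₁ ∨ A = A₁ᶜ)
    (S S' : Submodule ℂ F) (hS : M.IsSub S) (hS' : M.IsSub S')
    (hSchar : ∀ g : G, M.subChar S hS.2 g = ∑ᶠ ρ ∈ A₁, ρ.1 g)
    (hS'char : ∀ g : G, M.subChar S' hS'.2 g = ∑ᶠ ρ ∈ A₁, ρ.1 g) :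
    S = S' := by
  classical
  obtain ⟨hfd, e, he⟩ := hcon
  haveI : FiniteDimensional ℂ F := hfd
  haveI : Fintype G := Fintype.ofFinite G
  have hcard : (Fintype.card G : ℂ) ≠ 0 := by
    exact_mod_cast Nat.cast_ne_zero.mpr Fintype.card_ne_zero
  set L : G → (F →ₗ[ℂ] F) := fun g => (M.actG g : F →ₗ[ℂ] F) with hLdef
  have heL : ∀ (g : G) (v : F) (k : G), e (L g v) k = e v (g⁻¹ * k) := fun g v k => he g v k
  have Lmul : ∀ (a c : G) (v : F), L a (L c v) = L (a * c) v := by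
    intro a c v
    apply e.injective; funext k
    rw [heL, heL, heL, mul_inv_rev, mul_assoc]
  -- the basis of `F` given by `e`
  set b : Module.Basis G ℂ F := Module.Basis.ofEquivFun e with hbdef
  have hrep : ∀ (v : F) (x : G), b.repr v x = e v x := fun v x => rfl
  have hbL : ∀ x : G, b x = L x (b 1) := by
    intro x
    apply e.injective; funext k
    rw [heL]
    have h1 : e (b x) k = b.repr (b x) k := rfl
    have h2 : e (b 1) (x⁻¹ * k) = b.repr (b 1) (x⁻¹ * k) := rfl
    rw [h1, h2, b.repr_self, b.repr_self, Finsupp.single_apply, Finsupp.single_apply]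
    congr 1
    simp only [eq_iff_iff]
    constructor
    · rintro rfl; simp
    · intro h; rw [eq_comm, inv_mul_eq_one] at h; rw [h]
  have trB : ∀ f : F →ₗ[ℂ] F, LinearMap.trace ℂ F f = ∑ x : G, e (f (b x)) x := by
    intro f
    rw [LinearMap.trace_eq_matrix_trace ℂ b f, Matrix.trace]
    refine Finset.sum_congr rfl fun x _ => ?_
    rw [Matrix.diag_apply, LinearMap.toMatrix_apply, hrep]
  -- key: an equivariant projection onto a `G`-stable submodule, determined by the character
  have key : ∀ (T : Submodule ℂ F) (hT2 : ∀ (g : G) (v : F), v ∈ T → M.actG g v ∈ T),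
      ∃ P : F →ₗ[ℂ] F, (∀ v, P v ∈ T) ∧ (∀ v ∈ T, P v = v) ∧
        (∀ (g : G) (v : F), P (L g v) = L g (P v)) ∧
        (∀ g : G, M.subChar T hT2 g = (Fintype.card G : ℂ) * e (P (b 1)) g⁻¹) := by
    intro T hT2
    have hT2' : ∀ (g : G) (v : F), v ∈ T → L g v ∈ T := fun g v hv => hT2 g v hv
    obtain ⟨C, hC⟩ := Submodule.exists_isCompl T
    set π : F →ₗ[ℂ] F := T.subtype ∘ₗ Submodule.linearProjOfIsCompl T C hC with hπdef
    have hπmem : ∀ v, π v ∈ T := fun v => (Submodule.linearProjOfIsCompl T C hC v).2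
    have hπfix : ∀ v ∈ T, π v = v := by
      intro v hv
      show T.subtype (Submodule.linearProjOfIsCompl T C hC v) = v
      erw [show v = ((⟨v, hv⟩ : T) : F) from rfl, Submodule.linearProjOfIsCompl_apply_left hC]
      rfl
    set Q : F →ₗ[ℂ] F := ∑ g : G, L g ∘ₗ π ∘ₗ L g⁻¹ with hQdef
    have hQapp : ∀ v, Q v = ∑ g : G, L g (π (L g⁻¹ v)) := by
      intro v; rw [hQdef, LinearMap.sum_apply]; rfl
    set P : F →ₗ[ℂ] F := (Fintype.card G : ℂ)⁻¹ • Q with hPdef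
    have hPapp : ∀ v, P v = (Fintype.card G : ℂ)⁻¹ • Q v := fun v => rfl
    have hPmem : ∀ v, P v ∈ T := by
      intro v
      rw [hPapp]
      exact T.smul_mem _ (by rw [hQapp]; exact Submodule.sum_mem _ fun g _ => hT2' g _ (hπmem _))
    have Linv : ∀ (g : G) (v : F), L g (L g⁻¹ v) = v := by
      intro g v; rw [Lmul, mul_inv_cancel]
      apply e.injective; funext k; rw [heL, inv_one, one_mul]
    have hQfix : ∀ v ∈ T, Q v = (Fintype.card G : ℂ) • v := by
      intro v hv
      rw [hQapp]
      have h1 : ∀ g : G, L g (π (L g⁻¹ v)) = v := by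
        intro g
        rw [hπfix _ (hT2' g⁻¹ v hv), Linv]
      rw [Finset.sum_congr rfl fun g _ => h1 g, Finset.sum_const, Finset.card_univ,
        ← Nat.cast_smul_eq_nsmul ℂ]
    have hPfix : ∀ v ∈ T, P v = v := by
      intro v hv
      rw [hPapp, hQfix v hv, smul_smul, inv_mul_cancel₀ hcard, one_smul]
    have hQcomm : ∀ (h : G) (v : F), Q (L h v) = L h (Q v) := by
      intro h v
      rw [hQapp, hQapp, map_sum]
      refine Fintype.sum_equiv (Equiv.mulLeft h⁻¹) _ _ fun g => ?_
      simp only [Equiv.coe_mulLeft]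
      rw [show L g⁻¹ (L h v) = L (h⁻¹ * g)⁻¹ v from by
            rw [Lmul, mul_inv_rev, inv_inv],
          show ∀ w, L h (L (h⁻¹ * g) w) = L g w from fun w => by
            rw [Lmul, mul_inv_cancel_left]]
    have hPcomm : ∀ (g : G) (v : F), P (L g v) = L g (P v) := by
      intro g v
      rw [hPapp, hPapp, hQcomm, map_smul]
    refine ⟨P, hPmem, hPfix, hPcomm, ?_⟩
    intro g
    -- relate subChar to the trace of `L g ∘ₗ P` on `F`
    set q : F →ₗ[ℂ] T := LinearMap.codRestrict T P hPmem with hqdef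
    have hq1 : T.subtype ∘ₗ q = P := by ext v; rfl
    have hq2 : ∀ t : T, q (T.subtype t) = t := by
      intro t
      apply Subtype.ext
      show P (t : F) = (t : F)
      exact hPfix _ t.2
    set r : T →ₗ[ℂ] T := (L g).restrict (p := T) (q := T) (fun v hv => hT2 g v hv) with hrdef
    have hchar : M.subChar T hT2 g = LinearMap.trace ℂ T r := rfl
    have hres : T.subtype ∘ₗ r = L g ∘ₗ T.subtype := by
      apply LinearMap.ext
      intro t
      show ((r t : T) : F) = L g ((t : T) : F)
      exact LinearMap.restrict_coe_apply _ _ _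
    have htr : LinearMap.trace ℂ T r = LinearMap.trace ℂ F (L g ∘ₗ P) := by
      have c1 : L g ∘ₗ P = (L g ∘ₗ T.subtype) ∘ₗ q := by
        rw [LinearMap.comp_assoc, hq1]
      have c2 : (r ∘ₗ q) ∘ₗ T.subtype = r := by
        apply LinearMap.ext
        intro t
        show r (q (T.subtype t)) = r t
        rw [hq2]
      rw [c1, ← hres, LinearMap.comp_assoc, LinearMap.trace_comp_comm', c2]
    rw [hchar, htr, trB]
    have hterm : ∀ x : G, e ((L g ∘ₗ P) (b x)) x = e (P (b 1)) g⁻¹ := by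
      intro x
      have : (L g ∘ₗ P) (b x) = L g (L x (P (b 1))) := by
        rw [LinearMap.comp_apply, hbL x, hPcomm]
      rw [this, heL, heL]
      congr 1
      rw [hab g⁻¹ x, inv_mul_cancel_left]
    rw [Finset.sum_congr rfl fun x _ => hterm x, Finset.sum_const, Finset.card_univ,
      nsmul_eq_mul]
  -- apply the key to S and S'
  obtain ⟨P, hPmem, hPfix, hPcomm, hPtr⟩ := key S hS.2
  obtain ⟨P', hP'mem, hP'fix, hP'comm, hP'tr⟩ := key S' hS'.2
  have hu : P (b 1) = P' (b 1) := by
    apply e.injective; funext k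
    have h1 := hPtr k⁻¹
    have h2 := hP'tr k⁻¹
    rw [hSchar] at h1
    rw [hS'char] at h2
    rw [inv_inv] at h1 h2
    exact mul_left_cancel₀ hcard (h1.symm.trans h2)
  have hPP' : P = P' := by
    apply b.ext
    intro x
    rw [hbL x, hPcomm, hP'comm, hu]
  apply le_antisymm
  · intro s hs
    have : P' s = s := by rw [← hPP']; exact hPfix s hs
    rw [← this]
    exact hP'mem s
  · intro s hs
    have : P s = s := by rw [hPP']; exact hP'fix s hs
    rw [← this]
    exact hPmem s
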